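/- Let A be a commutative ring with 2 invertible, B a commutative A-algebra, and C_n = B^{⊗(n+1)}/(∑_{i<j} I_{ij}²) with J̃_{ij} the images of the I_{ij}. On C_n, the composite Φ_n ∘ Ψ_n equals ∏_{j=1}^n (id − M_j), where M_j is the endomorphism of C_n induced by y₀⊗⋯⊗y_j⊗⋯⊗yₙ ↦ (y₀y_j)⊗y₁⊗⋯⊗1⊗⋯⊗yₙ (moving the j-th entry into the 0-th slot and replacing it by 1). Since each M_j factors through the merge map μ_{0j}, the composite Φ_n ∘ Ψ_n restricts to the identity on the ideal ⋂_{j=1}^n J̃_{0j}. -/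

import Mathlib

open scoped TensorProduct
open PiTensorProduct

variable (A B : Type) [CommRing A] [CommRing B] [Algebra A B]

abbrev Bpow (n : ℕ) : Type := ⨂[A] (_ : Fin n), B

noncomputable def rmap {m n : ℕ} (r : Fin m → Fin n) : Bpow A B m →ₐ[A] Bpow A B n :=
  PiTensorProduct.liftAlgHom
    ((MultilinearMap.mkPiAlgebra A (Fin m) (Bpow A B n)).compLinearMap
      (fun k => (PiTensorProduct.singleAlgHom (R := A) (A := fun _ : Fin n => B) (r k)).toLinearMap))
    (by simp [← PiTensorProduct.one_def])
    (by intro x y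
        simp only [MultilinearMap.compLinearMap_apply, MultilinearMap.mkPiAlgebra_apply,
          Pi.mul_apply, AlgHom.toLinearMap_apply, _root_.map_mul, Finset.prod_mul_distrib])

noncomputable def mergeN (n i j : ℕ) (hij : i < j) (hj : j ≤ n) :
    Bpow A B (n+1) →ₐ[A] Bpow A B n :=
  rmap A B (fun k => if h1 : k.val < j then ⟨k.val, by omega⟩
    else if h2 : k.val = j then ⟨i, by omega⟩
    else ⟨k.val - 1, by have := k.isLt; omega⟩)

noncomputable def Iideal (n i j : ℕ) (hij : i < j) (hj : j ≤ n) : Ideal (Bpow A B (n+1)) :=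
  RingHom.ker (mergeN A B n i j hij hj)

noncomputable def Kideal (n : ℕ) : Ideal (Bpow A B (n+1)) :=
  ⨆ (i : ℕ) (j : ℕ) (hij : i < j) (hj : j ≤ n), (Iideal A B n i j hij hj) ^ 2

abbrev Cq (n : ℕ) : Type := Bpow A B (n+1) ⧸ Kideal A B n

noncomputable def Jt (n i j : ℕ) (hij : i < j) (hj : j ≤ n) : Ideal (Cq A B n) :=
  Ideal.map (Ideal.Quotient.mk (Kideal A B n)) (Iideal A B n i j hij hj)

noncomputable def dElt (n i j : ℕ) (hi : i ≤ n) (hj : j ≤ n) (y : B) : Bpow A B (n+1) :=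
  PiTensorProduct.singleAlgHom (R := A) (A := fun _ : Fin (n+1) => B) ⟨j, by omega⟩ y
    - PiTensorProduct.singleAlgHom (R := A) (A := fun _ : Fin (n+1) => B) ⟨i, by omega⟩ y

noncomputable def insN (n j : ℕ) (hj : j ≤ n+1) : Bpow A B (n+1) →ₐ[A] Bpow A B (n+2) :=
  rmap A B (fun k => if h : k.val < j then ⟨k.val, by omega⟩
    else ⟨k.val + 1, by have := k.isLt; omega⟩)

noncomputable def eN (n : ℕ) : Bpow A B (n+1) →ₗ[A] Bpow A B (n+2) :=
  ∑ j : Fin (n+2), ((-1 : ℤ) ^ (j : ℕ)) • (insN A B n j (by omega)).toLinearMap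

noncomputable def smashG (m n N : ℕ) (h : N = m + n) (x : Bpow A B (m+1)) (y : Bpow A B (n+1)) :
    Bpow A B (N+1) :=
  rmap A B (fun k : Fin (m+1) => (⟨k.val, by have := k.isLt; omega⟩ : Fin (N+1))) x *
  rmap A B (fun k : Fin (n+1) => (⟨m + k.val, by have := k.isLt; omega⟩ : Fin (N+1))) y

/-- The wedge `dy₁ ∧ ⋯ ∧ dyₙ`-style elements of the `n`-th exterior power. -/
noncomputable def wedgeD (n : ℕ) (f : Fin n → Ω[B⁄A]) : ⋀[B]^n (Ω[B⁄A]) :=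
  ⟨ExteriorAlgebra.ιMulti B n f, ExteriorAlgebra.ιMulti_range B n (Set.mem_range_self f)⟩

/-- `B`-algebra structure on `C_n` through the 0-th tensor factor. -/
noncomputable instance instAlgebraBCq (n : ℕ) : Algebra B (Cq A B n) :=
  ((Ideal.Quotient.mk (Kideal A B n)).comp
    (PiTensorProduct.singleAlgHom (R := A) (A := fun _ : Fin (n+1) => B) 0).toRingHom).toAlgebra


lemma rmap_tprod {m n : ℕ} (r : Fin m → Fin n) (y : Fin m → B) :
    rmap A B r (tprod A y) = ∏ k : Fin m,
      PiTensorProduct.singleAlgHom (R := A) (A := fun _ : Fin n => B) (r k) (y k) := by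
  unfold rmap
  erw [PiTensorProduct.liftAlgHom_apply, PiTensorProduct.lift.tprod]
  simp

lemma prod_single {n : ℕ} (y : Fin n → B) :
    (∏ k : Fin n, PiTensorProduct.singleAlgHom (R := A) (A := fun _ : Fin n => B) k (y k))
      = tprod A y := by
  simp only [PiTensorProduct.singleAlgHom_apply, MonoidHom.mulSingle_apply]
  rw [← PiTensorProduct.tprod_prod, Finset.univ_prod_mulSingle]

lemma rmap_single {m n : ℕ} (r : Fin m → Fin n) (i : Fin m) (b : B) :
    rmap A B r (PiTensorProduct.singleAlgHom (R := A) (A := fun _ : Fin m => B) i b)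
      = PiTensorProduct.singleAlgHom (R := A) (A := fun _ : Fin n => B) (r i) b := by
  simp only [PiTensorProduct.singleAlgHom_apply]
  rw [rmap_tprod, Finset.prod_eq_single i]
  · simp
  · intro k _ hk
    rw [MonoidHom.mulSingle_apply, Pi.mulSingle_eq_of_ne hk, _root_.map_one]
  · simp

lemma rmap_comp {m n p : ℕ} (r : Fin n → Fin p) (s : Fin m → Fin n) (x : Bpow A B m) :
    rmap A B r (rmap A B s x) = rmap A B (r ∘ s) x := by
  have h : (rmap A B r).comp (rmap A B s) = rmap A B (r ∘ s) := by
    apply PiTensorProduct.algHom_ext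
    intro i
    apply AlgHom.ext
    intro b
    simp only [AlgHom.comp_apply, rmap_single, Function.comp]
  exact congrArg (fun f => f x) h

/-- `Mⱼ`-style map on `Bpow A B (n+1)`. -/
noncomputable def Nmap (n : ℕ) (j : Fin n) : Bpow A B (n+1) →ₐ[A] Bpow A B (n+1) :=
  rmap A B (fun k : Fin (n+1) => if k.val = j.val + 1 then 0 else k)

lemma Nmap_dElt (n : ℕ) (j : Fin n) (i : ℕ) (hi : i + 1 ≤ n) (hne : i ≠ j.val) (b : B) :
    Nmap A B n j (dElt A B n 0 (i+1) (Nat.zero_le n) (by omega) b)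
      = dElt A B n 0 (i+1) (Nat.zero_le n) (by omega) b := by
  simp only [dElt, map_sub, Nmap, rmap_single]
  rw [if_neg (by intro hc; exact absurd (show i + 1 = j.val + 1 from hc) (by omega)),
    if_neg (by intro hc; exact absurd (show 0 = j.val + 1 from hc) (by omega))]

lemma Nmap_tprod_one (n : ℕ) (j : Fin n) (z : Fin (n+1) → B)
    (hz : z ⟨j.val+1, by omega⟩ = 1) :
    Nmap A B n j (tprod A z) = tprod A z := by
  rw [Nmap, rmap_tprod, ← prod_single]
  apply Finset.prod_congr rfl
  intro k _
  by_cases h : k.val = j.val + 1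
  · have hk : k = ⟨j.val+1, by omega⟩ := Fin.ext h
    rw [if_pos h, hk, hz, _root_.map_one, _root_.map_one]
  · rw [if_neg h]

lemma tprod_split (n m : ℕ) (hm : m < n) (y : Fin (n+1) → B) :
    tprod A (fun k : Fin (n+1) => if m+1 < k.val then (1:B) else y k)
      = PiTensorProduct.singleAlgHom (R := A) (A := fun _ : Fin (n+1) => B)
          ⟨m+1, by omega⟩ (y ⟨m+1, by omega⟩)
        * tprod A (fun k : Fin (n+1) => if m < k.val then (1:B) else y k) := by
  rw [PiTensorProduct.singleAlgHom_apply, PiTensorProduct.tprod_mul_tprod]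
  congr 1
  funext k
  by_cases h : k.val = m+1
  · have hk : k = ⟨m+1, by omega⟩ := Fin.ext h
    rw [hk, Pi.mul_apply, MonoidHom.mulSingle_apply, Pi.mulSingle_eq_same,
      if_neg (by omega), if_pos (by omega), mul_one]
  · have hne : k ≠ ⟨m+1, by omega⟩ := fun hkk => h (by rw [hkk])
    rw [Pi.mul_apply, MonoidHom.mulSingle_apply, Pi.mulSingle_eq_of_ne hne, one_mul]
    by_cases h2 : m < k.val
    · rw [if_pos (by omega), if_pos h2]
    · rw [if_neg (by omega), if_neg h2]

/-- `dy`-factor with junk value `1` out of range. -/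
noncomputable def Dfun (n : ℕ) (y : Fin (n+1) → B) (j : ℕ) : Bpow A B (n+1) :=
  if h : j + 1 ≤ n then dElt A B n 0 (j+1) (Nat.zero_le n) h (y ⟨j+1, by omega⟩) else 1

lemma key (n : ℕ) (y : Fin (n+1) → B) :
    ∀ d m, m + d = n →
    ((List.ofFn (fun j : Fin n =>
      (LinearMap.id : Bpow A B (n+1) →ₗ[A] Bpow A B (n+1)) - (Nmap A B n j).toLinearMap)).drop m).prod
        (tprod A y)
    = (∏ j ∈ Finset.Ico m n, Dfun A B n y j)
        * tprod A (fun k : Fin (n+1) => if m < k.val then (1:B) else y k) := by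
  intro d
  induction d with
  | zero =>
    intro m hm
    obtain rfl : m = n := by omega
    rw [List.drop_eq_nil_of_le (by simp), List.prod_nil, Module.End.one_apply,
      Finset.Ico_self, Finset.prod_empty, one_mul]
    congr 1
    funext k
    rw [if_neg (by have := k.isLt; omega)]
  | succ d ih =>
    intro m hm
    have hmn : m < n := by omega
    rw [List.drop_eq_getElem_cons (by simpa using hmn), List.prod_cons, Module.End.mul_apply,
      List.getElem_ofFn, ih (m+1) (by omega)]
    rw [LinearMap.sub_apply, LinearMap.id_apply, AlgHom.toLinearMap_apply]
    have hD : Nmap A B n ⟨m, hmn⟩ (∏ j ∈ Finset.Ico (m+1) n, Dfun A B n y j)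
        = ∏ j ∈ Finset.Ico (m+1) n, Dfun A B n y j := by
      rw [map_prod]
      apply Finset.prod_congr rfl
      intro j hj
      rw [Finset.mem_Ico] at hj
      rw [Dfun, dif_pos (by omega)]
      exact Nmap_dElt A B n ⟨m, hmn⟩ j (by omega) (show j ≠ m by omega) _
    have hT2 : Nmap A B n ⟨m, hmn⟩
        (tprod A (fun k : Fin (n+1) => if m < k.val then (1:B) else y k))
        = tprod A (fun k : Fin (n+1) => if m < k.val then (1:B) else y k) :=
      Nmap_tprod_one A B n ⟨m, hmn⟩ _ (by rw [if_pos (Nat.lt_succ_self m)])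
    have hsingle : Nmap A B n ⟨m, hmn⟩
        (PiTensorProduct.singleAlgHom (R := A) (A := fun _ : Fin (n+1) => B)
          ⟨m+1, by omega⟩ (y ⟨m+1, by omega⟩))
        = PiTensorProduct.singleAlgHom (R := A) (A := fun _ : Fin (n+1) => B)
          ⟨0, by omega⟩ (y ⟨m+1, by omega⟩) := by
      rw [Nmap, rmap_single]
      congr 1
      rw [if_pos rfl]
      first
      | rfl
      | exact Fin.ext rfl
      | exact Fin.ext (by simp)
      | simp
    rw [tprod_split A B n m hmn y, _root_.map_mul, hD, _root_.map_mul, hsingle, hT2,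
      Finset.prod_eq_prod_Ico_succ_bot hmn, Dfun, dif_pos (by omega : m + 1 ≤ n)]
    rw [dElt]
    ring

lemma Nmap_ker (n : ℕ) (j : Fin n) (ξ : Bpow A B (n+1))
    (hξ : ξ ∈ Iideal A B n 0 (j.val+1) (Nat.succ_pos _) j.isLt) :
    Nmap A B n j ξ = 0 := by
  have h0 : mergeN A B n 0 (j.val+1) (by omega) (by have := j.isLt; omega) ξ = 0 := by
    simpa [Iideal, RingHom.mem_ker] using hξ
  have hcomp : Nmap A B n j ξ
      = rmap A B (fun k : Fin n => if k.val < j.val + 1 then (⟨k.val, by omega⟩ : Fin (n+1))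
          else ⟨k.val + 1, by have := k.isLt; omega⟩)
        (mergeN A B n 0 (j.val+1) (by omega) (by have := j.isLt; omega) ξ) := by
    rw [mergeN, rmap_comp, Nmap]
    apply congrArg (fun f => rmap A B f ξ)
    funext k
    apply Fin.ext
    simp only [Function.comp]
    simp only [apply_dite (Fin.val), apply_ite (Fin.val), Fin.val_mk, Fin.val_zero]
    split_ifs <;> omega
  rw [hcomp, h0, map_zero]

set_option maxHeartbeats 1000000 in
/-- (2 invertible in `A`.)  On `Cₙ`, `Φₙ ∘ Ψₙ = ∏_{j=1}^n (id − Mⱼ)`,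
where `Mⱼ` is induced by moving the `j`-th entry into the 0-th slot; consequently
`Φₙ ∘ Ψₙ` restricts to the identity on `⋂_{j=1}^n J̃₀ⱼ`. -/
theorem statement12 (n : ℕ) (h2 : IsUnit (2 : A))
    (Ψ : Cq A B (n) →ₗ[A] ⋀[B]^(n) (Ω[B⁄A]))
    (hΨ : ∀ y : Fin (n+1) → B,
      Ψ (Ideal.Quotient.mk (Kideal A B (n)) (PiTensorProduct.tprod A y))
        = y 0 • wedgeD A B (n) (fun i => KaehlerDifferential.D A B (y i.succ)))
    (Φ : (⋀[B]^n (Ω[B⁄A])) →ₗ[B] Cq A B n)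
    (hΦ : ∀ y : Fin n → B,
      Φ (wedgeD A B n (fun i => KaehlerDifferential.D A B (y i)))
        = ∏ i : Fin n, Ideal.Quotient.mk (Kideal A B n)
            (dElt A B n 0 (i.val+1) (by omega) (by have := i.isLt; omega) (y i)))
    (M : Fin n → (Cq A B n →ₗ[A] Cq A B n))
    (hM : ∀ (j : Fin n) (x : Bpow A B (n+1)),
      M j (Ideal.Quotient.mk (Kideal A B n) x)
        = Ideal.Quotient.mk (Kideal A B n)
            (rmap A B (fun k : Fin (n+1) => if k.val = j.val + 1 then 0 else k) x)) :
    (∀ x : Cq A B n,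
      Φ (Ψ x) = (List.ofFn (fun j : Fin n =>
        (LinearMap.id : Cq A B n →ₗ[A] Cq A B n) - M j)).prod x) ∧
    (∀ x ∈ ⨅ j : Fin n, Jt A B n 0 (j.val+1) (by omega) (by have := j.isLt; omega),
      Φ (Ψ x) = x) := by
  classical
  set mkQ := Ideal.Quotient.mk (Kideal A B n) with hmkQdef
  have hM' : ∀ (j : Fin n) (x : Bpow A B (n+1)), M j (mkQ x) = mkQ (Nmap A B n j x) := hM
  -- transfer the list product through the quotient map
  have hlist : ∀ (l : List (Fin n)) (x : Bpow A B (n+1)),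
      (l.map (fun j => (LinearMap.id : Cq A B n →ₗ[A] Cq A B n) - M j)).prod (mkQ x)
        = mkQ ((l.map (fun j => (LinearMap.id : Bpow A B (n+1) →ₗ[A] Bpow A B (n+1))
            - (Nmap A B n j).toLinearMap)).prod x) := by
    intro l
    induction l with
    | nil => intro x; simp
    | cons j l ihl =>
      intro x
      simp only [List.map_cons, List.prod_cons, Module.End.mul_apply, ihl,
        LinearMap.sub_apply, LinearMap.id_apply, AlgHom.toLinearMap_apply, map_sub, hM']
  -- the main identity on pure tensors
  have htp : ∀ y : Fin (n+1) → B, Φ (Ψ (mkQ (tprod A y)))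
      = (List.ofFn (fun j : Fin n =>
          (LinearMap.id : Cq A B n →ₗ[A] Cq A B n) - M j)).prod (mkQ (tprod A y)) := by
    intro y
    have hk := key A B n y n 0 (by omega)
    rw [List.drop_zero] at hk
    rw [hΨ y, map_smul, hΦ (fun i => y i.succ), List.ofFn_eq_map, hlist,
      ← List.ofFn_eq_map, hk]
    have hsmul : ∀ z : Cq A B n, y 0 • z
        = mkQ (PiTensorProduct.singleAlgHom (R := A) (A := fun _ : Fin (n+1) => B) 0 (y 0))
          * z := by
      intro z
      rw [Algebra.smul_def]
      rfl
    have hfun0 : (fun k : Fin (n+1) => if 0 < k.val then (1:B) else y k)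
        = ⇑(MonoidHom.mulSingle (fun _ : Fin (n+1) => B) 0) (y 0) := by
      funext k
      by_cases h : k = 0
      · subst h
        rw [if_neg (by simp), MonoidHom.mulSingle_apply, Pi.mulSingle_eq_same]
      · have hv : k.val ≠ 0 := fun hv => h (Fin.ext hv)
        rw [if_pos (Nat.pos_of_ne_zero hv), MonoidHom.mulSingle_apply,
          Pi.mulSingle_eq_of_ne h]
    have h0 : tprod A (fun k : Fin (n+1) => if 0 < k.val then (1:B) else y k)
        = PiTensorProduct.singleAlgHom (R := A) (A := fun _ : Fin (n+1) => B) 0 (y 0) := by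
      rw [PiTensorProduct.singleAlgHom_apply, hfun0]
    have hprod : (∏ i : Fin n, mkQ (dElt A B n 0 (i.val+1) (by omega)
          (by have := i.isLt; omega) (y i.succ)))
        = mkQ (∏ j ∈ Finset.Ico 0 n, Dfun A B n y j) := by
      rw [map_prod, ← Finset.range_eq_Ico,
        ← Fin.prod_univ_eq_prod_range (fun j => mkQ (Dfun A B n y j)) n]
      apply Finset.prod_congr rfl
      intro i _
      rw [Dfun, dif_pos (show i.val + 1 ≤ n from i.isLt)]
      rfl
    rw [hsmul, hprod, _root_.map_mul, h0, mul_comm]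
  -- the full first statement
  have main1 : ∀ x : Cq A B n,
      Φ (Ψ x) = (List.ofFn (fun j : Fin n =>
        (LinearMap.id : Cq A B n →ₗ[A] Cq A B n) - M j)).prod x := by
    intro x
    obtain ⟨b, rfl⟩ := Ideal.Quotient.mk_surjective x
    refine PiTensorProduct.induction_on b ?_ ?_
    · intro r y
      have hry : r • tprod A y = tprod A (Function.update y 0 (r • y 0)) := by
        rw [MultilinearMap.map_update_smul, Function.update_eq_self]
      rw [hry]
      exact htp _
    · intro u v hu hv
      have hq : mkQ (u + v) = mkQ u + mkQ v := map_add _ _ _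
      rw [hq, map_add, map_add, map_add, hu, hv]
  refine ⟨main1, ?_⟩
  intro x hx
  rw [main1 x]
  have hM0 : ∀ j : Fin n, M j x = 0 := by
    intro j
    have hxj : x ∈ Jt A B n 0 (j.val+1) (by omega) (by have := j.isLt; omega) :=
      (Submodule.mem_iInf _).mp hx j
    rw [Jt] at hxj
    obtain ⟨ξ, hξ, rfl⟩ :=
      (Ideal.mem_map_iff_of_surjective _ Ideal.Quotient.mk_surjective).mp hxj
    rw [hM' j ξ, Nmap_ker A B n j ξ hξ, map_zero]
  rw [List.ofFn_eq_map]
  have hfix : ∀ l : List (Fin n),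
      ((l.map (fun j => (LinearMap.id : Cq A B n →ₗ[A] Cq A B n) - M j)).prod) x = x := by
    intro l
    induction l with
    | nil => simp
    | cons j l ih =>
      rw [List.map_cons, List.prod_cons, Module.End.mul_apply, ih, LinearMap.sub_apply,
        LinearMap.id_apply, hM0 j, sub_zero]
  exact hfix _
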